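/- Every nonzero codeword of the twisted generalized Reed–Solomon code C_{k,1,k-1}(α,𝟏,η) has Hamming weight at least n-k+1 (equivalently, the code is MDS) if and only if η·∑_{i∈I} α_i ≠ -1 for every subset I ⊆ {1,…,n} with |I| = k. -/

import Mathlib

open Polynomial

/-- The set of `(k,1,ℓ,η)`-twisted polynomials:
`{ ∑_{i=0}^{k-1} a_i x^i + η a_ℓ x^k : a_i ∈ F }`. -/
def twistedSpace {F : Type*} [Field F] (k ℓ : ℕ) (hℓ : ℓ < k) (η : F) :
    Set (Polynomial F) :=
  {f | ∃ a : Fin k → F,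
    f = (∑ i : Fin k, Polynomial.C (a i) * Polynomial.X ^ (i : ℕ))
          + Polynomial.C (η * a ⟨ℓ, hℓ⟩) * Polynomial.X ^ k}

/-- The twisted generalized Reed–Solomon code `C_{k,1,ℓ}(α, 1, η)`. -/
def tgrsCode {F : Type*} [Field F] {n : ℕ} (k ℓ : ℕ) (hℓ : ℓ < k)
    (α : Fin n → F) (η : F) : Set (Fin n → F) :=
  {v | ∃ f ∈ twistedSpace k ℓ hℓ η, ∀ j, v j = f.eval (α j)}

lemma tgrs_sum_coeff {F : Type*} [Field F] {k : ℕ} (a : Fin k → F) (j : ℕ) :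
    (∑ i : Fin k, Polynomial.C (a i) * Polynomial.X ^ (i : ℕ)).coeff j
      = if h : j < k then a ⟨j, h⟩ else 0 := by
  rw [Polynomial.finset_sum_coeff]
  simp_rw [Polynomial.coeff_C_mul, Polynomial.coeff_X_pow, mul_ite, mul_one, mul_zero]
  split
  · case isTrue h =>
      rw [Finset.sum_eq_single (⟨j, h⟩ : Fin k)]
      · simp
      · intro b _ hb
        rw [if_neg]
        intro hbj
        exact hb (Fin.ext hbj.symm)
      · simp
  · case isFalse h =>
      apply Finset.sum_eq_zero
      intro b _
      rw [if_neg]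
      intro hbj
      exact h (hbj ▸ b.isLt)

lemma mem_twisted_iff {F : Type*} [Field F] {k : ℕ} (hk : 1 ≤ k) (η : F) (f : Polynomial F) :
    f ∈ twistedSpace k (k - 1) (Nat.sub_lt hk Nat.one_pos) η ↔
      f.natDegree ≤ k ∧ f.coeff k = η * f.coeff (k - 1) := by
  constructor
  · rintro ⟨a, rfl⟩
    refine ⟨?_, ?_⟩
    · apply (Polynomial.natDegree_add_le _ _).trans
      apply max_le
      · apply Polynomial.natDegree_sum_le_of_forall_le
        intro i _
        exact (Polynomial.natDegree_C_mul_le _ _).trans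
          (by simpa using i.isLt.le)
      · exact (Polynomial.natDegree_C_mul_le _ _).trans (by simp)
    · have h1 : k - 1 < k := Nat.sub_lt hk Nat.one_pos
      rw [Polynomial.coeff_add, Polynomial.coeff_add, tgrs_sum_coeff, tgrs_sum_coeff,
        dif_neg (lt_irrefl k), dif_pos h1, Polynomial.coeff_C_mul, Polynomial.coeff_C_mul,
        Polynomial.coeff_X_pow, Polynomial.coeff_X_pow, if_pos rfl, if_neg (Nat.ne_of_lt h1)]
      ring
  · rintro ⟨hdeg, hc⟩
    refine ⟨fun i => f.coeff i, ?_⟩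
    ext j
    rw [Polynomial.coeff_add, tgrs_sum_coeff, Polynomial.coeff_C_mul, Polynomial.coeff_X_pow]
    rcases lt_trichotomy j k with h | rfl | h
    · rw [dif_pos h, if_neg (Nat.ne_of_lt h), mul_zero, add_zero]
    · rw [dif_neg (lt_irrefl j), if_pos rfl, mul_one, zero_add, hc]
    · rw [dif_neg (not_lt.mpr h.le), if_neg (Nat.ne_of_gt h), mul_zero, add_zero,
        Polynomial.coeff_eq_zero_of_natDegree_lt (hdeg.trans_lt h)]

lemma tgrs_count_le {F : Type*} [Field F] [DecidableEq F] {n : ℕ} (α : Fin n → F)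
    (hα : Function.Injective α) {f : Polynomial F} (hf : f ≠ 0) :
    (Finset.univ.filter fun j => f.eval (α j) = 0).card ≤ f.natDegree := by
  calc (Finset.univ.filter fun j => f.eval (α j) = 0).card
      ≤ f.roots.toFinset.card := by
        apply Finset.card_le_card_of_injOn α
        · intro j hj
          simp only [Finset.mem_coe, Finset.mem_filter] at hj
          simp [Multiset.mem_toFinset, Polynomial.mem_roots', hf, Polynomial.IsRoot, hj.2]
        · exact hα.injOn
    _ ≤ Multiset.card f.roots := f.roots.toFinset_card_le
    _ ≤ f.natDegree := f.card_roots'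

lemma tgrs_key {F : Type*} [Field F] [DecidableEq F] {n k : ℕ} (hk : 1 ≤ k)
    (α : Fin n → F) (hα : Function.Injective α) {η : F} {f : Polynomial F}
    (hf : f ≠ 0) (hdeg : f.natDegree ≤ k) (hc : f.coeff k = η * f.coeff (k - 1))
    (I : Finset (Fin n)) (hI : I.card = k) (hroots : ∀ i ∈ I, f.eval (α i) = 0) :
    η * ∑ i ∈ I, α i = -1 := by
  set s : Multiset F := I.val.map α with hs
  have hsnodup : s.Nodup := I.nodup.map hα
  have hscard : Multiset.card s = k := by simp [hs, hI]
  have hle : s ≤ f.roots := by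
    rw [Multiset.le_iff_subset hsnodup]
    intro x hx
    simp only [hs, Multiset.mem_map, Finset.mem_val] at hx
    obtain ⟨i, hi, rfl⟩ := hx
    rw [Polynomial.mem_roots hf]
    exact hroots i hi
  have hcard : Multiset.card f.roots = k :=
    le_antisymm (f.card_roots'.trans hdeg) (hscard ▸ Multiset.card_le_card hle)
  have hseq : s = f.roots :=
    Multiset.eq_of_le_of_card_le hle (by rw [hcard, hscard])
  have hndeg : f.natDegree = k := le_antisymm hdeg (hcard ▸ f.card_roots')
  have heq := Polynomial.C_leadingCoeff_mul_prod_multiset_X_sub_C (p := f)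
    (by rw [hcard, hndeg])
  set c := f.leadingCoeff with hcdef
  have hc0 : c ≠ 0 := Polynomial.leadingCoeff_ne_zero.mpr hf
  have hprod : (f.roots.map fun a => X - C a).prod = ∏ i ∈ I, (X - C (α i)) := by
    rw [← hseq, hs, Multiset.map_map]
    rfl
  have hmonic : (∏ i ∈ I, (X - C (α i))).Monic :=
    monic_prod_of_monic _ _ fun i _ => monic_X_sub_C _
  have hPdeg : (∏ i ∈ I, (X - C (α i))).natDegree = k := by
    rw [Polynomial.natDegree_prod _ _ fun i _ => X_sub_C_ne_zero (α i)]
    simp [hI]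
  have hPk : (∏ i ∈ I, (X - C (α i))).coeff k = 1 := by
    rw [← hPdeg]
    exact hmonic.coeff_natDegree
  have hPk1 : (∏ i ∈ I, (X - C (α i))).coeff (k - 1) = -∑ i ∈ I, α i := by
    have h1 := Polynomial.prod_X_sub_C_coeff_card_pred I α (by rw [hI]; exact hk)
    rwa [hI] at h1
  have hfk : f.coeff k = c := by
    conv_lhs => rw [← heq]
    rw [hprod, Polynomial.coeff_C_mul, hPk, mul_one]
  have hfk1 : f.coeff (k - 1) = c * (-∑ i ∈ I, α i) := by
    conv_lhs => rw [← heq]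
    rw [hprod, Polynomial.coeff_C_mul, hPk1]
  rw [hfk, hfk1] at hc
  have h2 : c * (1 + η * ∑ i ∈ I, α i) = 0 := by linear_combination hc
  rcases mul_eq_zero.mp h2 with h | h
  · exact absurd h hc0
  · linear_combination h

/-- The code `C_{k,1,k-1}(α,1,η)` is MDS (every nonzero codeword has Hamming weight
at least `n-k+1`) iff `η ∑_{i∈I} α_i ≠ -1` for every `k`-subset `I`. -/
theorem tgrs_mds_iff {F : Type*} [Field F] [DecidableEq F] {n k : ℕ}
    (hk : 1 ≤ k) (hkn : k < n)
    (α : Fin n → F) (hα : Function.Injective α) (η : F) (hη : η ≠ 0) :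
    (∀ v ∈ tgrsCode k (k - 1) (Nat.sub_lt hk Nat.one_pos) α η,
        v ≠ 0 → n - k + 1 ≤ hammingNorm v)
      ↔ ∀ I : Finset (Fin n), I.card = k → η * ∑ i ∈ I, α i ≠ -1 := by
  constructor
  · -- MDS → condition
    intro hmds I hI hbad
    set f : Polynomial F := C η * ∏ i ∈ I, (X - C (α i)) with hf
    have hP0 : (∏ i ∈ I, (X - C (α i))) ≠ 0 :=
      Finset.prod_ne_zero_iff.mpr fun i _ => X_sub_C_ne_zero (α i)
    have hf0 : f ≠ 0 := mul_ne_zero (by simpa using hη) hP0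
    have hPdeg : (∏ i ∈ I, (X - C (α i))).natDegree = k := by
      rw [Polynomial.natDegree_prod _ _ fun i _ => X_sub_C_ne_zero (α i)]
      simp [hI]
    have hfdeg : f.natDegree = k := by
      rw [hf, Polynomial.natDegree_C_mul hη, hPdeg]
    have hmonic : (∏ i ∈ I, (X - C (α i))).Monic :=
      monic_prod_of_monic _ _ fun i _ => monic_X_sub_C _
    have hfk : f.coeff k = η := by
      rw [hf, Polynomial.coeff_C_mul, ← hPdeg, hmonic.coeff_natDegree, mul_one]
    have hfk1 : f.coeff (k - 1) = 1 := by
      have h1 := Polynomial.prod_X_sub_C_coeff_card_pred I α (by rw [hI]; exact hk)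
      rw [hI] at h1
      rw [hf, Polynomial.coeff_C_mul, h1]
      linear_combination -hbad
    have hmem : f ∈ twistedSpace k (k - 1) (Nat.sub_lt hk Nat.one_pos) η :=
      (mem_twisted_iff hk η f).mpr ⟨hfdeg.le, by rw [hfk, hfk1, mul_one]⟩
    set v : Fin n → F := fun j => f.eval (α j) with hv
    have hvmem : v ∈ tgrsCode k (k - 1) (Nat.sub_lt hk Nat.one_pos) α η :=
      ⟨f, hmem, fun j => rfl⟩
    have hroot : ∀ i ∈ I, f.eval (α i) = 0 := by
      intro i hi
      rw [hf, Polynomial.eval_mul, Polynomial.eval_prod,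
        Finset.prod_eq_zero hi (by simp)]
      ring
    have hv0 : v ≠ 0 := by
      intro h0
      have hle : (Finset.univ.filter fun j => f.eval (α j) = 0).card ≤ k := by
        rw [← hfdeg]; exact tgrs_count_le α hα hf0
      have huniv : (Finset.univ.filter fun j => f.eval (α j) = 0) = Finset.univ := by
        apply Finset.filter_true_of_mem
        intro j _
        have := congrFun h0 j
        simpa [hv] using this
      rw [huniv, Finset.card_univ, Fintype.card_fin] at hle
      omega
    have hw : hammingNorm v ≤ n - k := by
      have hsub : (Finset.univ.filter fun j => v j ≠ 0) ⊆ Iᶜ := by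
        intro j hj
        simp only [Finset.mem_filter] at hj
        rw [Finset.mem_compl]
        intro hjI
        exact hj.2 (hroot j hjI)
      calc hammingNorm v ≤ Iᶜ.card := Finset.card_le_card hsub
        _ = n - k := by rw [Finset.card_compl, hI, Fintype.card_fin]
    have := hmds v hvmem hv0
    omega
  · -- condition → MDS
    intro hcond v hv hv0
    obtain ⟨f, hfmem, hvf⟩ := hv
    obtain ⟨hdeg, hcoef⟩ := (mem_twisted_iff hk η f).mp hfmem
    have hf0 : f ≠ 0 := by
      intro h
      apply hv0
      funext j
      rw [hvf j, h, Polynomial.eval_zero]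
      rfl
    by_contra hlt
    push_neg at hlt
    have hwle : hammingNorm v ≤ n - k := by omega
    set Z : Finset (Fin n) := Finset.univ.filter fun j => f.eval (α j) = 0 with hZ
    have hZcard : k ≤ Z.card := by
      have hZeq : Z = Finset.univ.filter fun j => ¬ v j ≠ 0 := by
        apply Finset.filter_congr
        intro j _
        simp [hvf j]
      have hHN : hammingNorm v = (Finset.univ.filter fun j => v j ≠ 0).card := rfl
      have hfilter : hammingNorm v + Z.card = n := by
        rw [hHN, hZeq, Finset.card_filter_add_card_filter_not, Finset.card_univ,
          Fintype.card_fin]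
      omega
    obtain ⟨I, hIZ, hIcard⟩ := Finset.exists_subset_card_eq hZcard
    exact hcond I hIcard (tgrs_key hk α hα hf0 hdeg hcoef I hIcard fun i hi => by
      have hiZ := hIZ hi
      simp only [hZ, Finset.mem_filter] at hiZ
      exact hiZ.2)
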